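/- Fix κ > 0 and let g_κ(r) := e^{−κr}/(4πr). For any four distinct points y₁, …, y₄ on the unit sphere S² ⊂ ℝ³, ∑_{j ≠ j'} g_κ(‖y_j − y_{j'}‖) ≥ 12 g_κ(√(8/3)), with equality if and only if all six pairwise distances equal √(8/3), i.e. the points are the vertices of a regular tetrahedron inscribed in the sphere. -/

import Mathlib

open Real Finset

/-- The free resolvent kernel of `−Δ` in `ℝ³` at energy `−κ²`:
`g_κ(r) = e^{−κr}/(4πr)`. -/
noncomputable def resolventKernel3D (κ r : ℝ) : ℝ :=
  Real.exp (-κ * r) / (4 * Real.pi * r)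

/-- The interaction energy `∑_{j ≠ j'} g_κ(‖y_j − y_{j'}‖)` of a family of points,
the sum running over ordered pairs of distinct indices. -/
noncomputable def interactionEnergy {n : ℕ} (κ : ℝ)
    (y : Fin n → EuclideanSpace ℝ (Fin 3)) : ℝ :=
  ∑ p ∈ Finset.univ.offDiag, resolventKernel3D κ ‖y p.1 - y p.2‖

/-- The kernel as a function of squared distance. -/
noncomputable def phiK (κ s : ℝ) : ℝ :=
  Real.exp (-κ * Real.sqrt s) / (4 * Real.pi * Real.sqrt s)

noncomputable def phiK1 (κ s : ℝ) : ℝ :=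
  -(Real.exp (-κ * Real.sqrt s) * (κ * Real.sqrt s + 1)) / (8 * Real.pi * Real.sqrt s ^ 3)

noncomputable def phiK2 (κ s : ℝ) : ℝ :=
  Real.exp (-κ * Real.sqrt s) * (κ ^ 2 * Real.sqrt s ^ 2 + 3 * κ * Real.sqrt s + 3)
    / (16 * Real.pi * Real.sqrt s ^ 5)

lemma hasDerivAt_F (κ : ℝ) {u : ℝ} (hu : 0 < u) :
    HasDerivAt (fun v => Real.exp (-κ * v) / (4 * Real.pi * v))
      (-(Real.exp (-κ * u) * (κ * u + 1)) / (4 * Real.pi * u ^ 2)) u := by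
  have hnum : HasDerivAt (fun v => Real.exp (-κ * v)) (Real.exp (-κ * u) * (-κ)) u := by
    have h1 : HasDerivAt (fun v : ℝ => -κ * v) (-κ) u := by
      simpa using (hasDerivAt_id u).const_mul (-κ)
    exact (Real.hasDerivAt_exp (-κ * u)).comp u h1
  have hden : HasDerivAt (fun v : ℝ => 4 * Real.pi * v) (4 * Real.pi) u := by
    simpa using (hasDerivAt_id u).const_mul (4 * Real.pi)
  have hne : 4 * Real.pi * u ≠ 0 := by positivity
  have h := hnum.div hden hne
  refine h.congr_deriv (Eq.symm ?_)
  have hπ : Real.pi ≠ 0 := Real.pi_ne_zero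
  field_simp
  ring

lemma hasDerivAt_W (κ : ℝ) {u : ℝ} (hu : 0 < u) :
    HasDerivAt (fun v => -(Real.exp (-κ * v) * (κ * v + 1)) / (8 * Real.pi * v ^ 3))
      (Real.exp (-κ * u) * (κ ^ 2 * u ^ 2 + 3 * κ * u + 3) / (8 * Real.pi * u ^ 4)) u := by
  have hexp : HasDerivAt (fun v => Real.exp (-κ * v)) (Real.exp (-κ * u) * (-κ)) u := by
    have h1 : HasDerivAt (fun v : ℝ => -κ * v) (-κ) u := by
      simpa using (hasDerivAt_id u).const_mul (-κ)
    exact (Real.hasDerivAt_exp (-κ * u)).comp u h1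
  have haff : HasDerivAt (fun v : ℝ => κ * v + 1) κ u := by
    simpa using ((hasDerivAt_id u).const_mul κ).add_const 1
  have hnum : HasDerivAt (fun v => -(Real.exp (-κ * v) * (κ * v + 1)))
      (-(Real.exp (-κ * u) * (-κ) * (κ * u + 1) + Real.exp (-κ * u) * κ)) u :=
    (hexp.mul haff).neg
  have hden : HasDerivAt (fun v : ℝ => 8 * Real.pi * v ^ 3) (8 * Real.pi * (3 * u ^ 2)) u := by
    simpa using (hasDerivAt_pow 3 u).const_mul (8 * Real.pi)
  have hne : 8 * Real.pi * u ^ 3 ≠ 0 := by positivity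
  have h := hnum.div hden hne
  refine h.congr_deriv (Eq.symm ?_)
  have hπ : Real.pi ≠ 0 := Real.pi_ne_zero
  field_simp
  ring

lemma hasDerivAt_phiK (κ : ℝ) {s : ℝ} (hs : 0 < s) :
    HasDerivAt (phiK κ) (phiK1 κ s) s := by
  have hu : 0 < Real.sqrt s := Real.sqrt_pos.2 hs
  have h := (hasDerivAt_F κ hu).comp s (Real.hasDerivAt_sqrt hs.ne')
  refine h.congr_deriv (Eq.symm ?_)
  unfold phiK1
  have hne : Real.sqrt s ≠ 0 := hu.ne'
  have hπ : Real.pi ≠ 0 := Real.pi_ne_zero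
  have hsq : Real.sqrt s ^ 2 = s := Real.sq_sqrt hs.le
  field_simp
  ring

lemma hasDerivAt_phiK1 (κ : ℝ) {s : ℝ} (hs : 0 < s) :
    HasDerivAt (phiK1 κ) (phiK2 κ s) s := by
  have hu : 0 < Real.sqrt s := Real.sqrt_pos.2 hs
  have h := (hasDerivAt_W κ hu).comp s (Real.hasDerivAt_sqrt hs.ne')
  refine h.congr_deriv (Eq.symm ?_)
  unfold phiK2
  have hne : Real.sqrt s ≠ 0 := hu.ne'
  have hπ : Real.pi ≠ 0 := Real.pi_ne_zero
  have hsq : Real.sqrt s ^ 2 = s := Real.sq_sqrt hs.le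
  field_simp
  ring

lemma phiK1_neg {κ : ℝ} (hκ : 0 < κ) {s : ℝ} (hs : 0 < s) : phiK1 κ s < 0 := by
  unfold phiK1
  have hu : 0 < Real.sqrt s := Real.sqrt_pos.2 hs
  have h1 : 0 < Real.exp (-κ * Real.sqrt s) * (κ * Real.sqrt s + 1) := by positivity
  have h2 : 0 < 8 * Real.pi * Real.sqrt s ^ 3 := by positivity
  exact div_neg_of_neg_of_pos (neg_neg_of_pos h1) h2

lemma phiK2_pos {κ : ℝ} (hκ : 0 < κ) {s : ℝ} (hs : 0 < s) : 0 < phiK2 κ s := by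
  unfold phiK2
  have hu : 0 < Real.sqrt s := Real.sqrt_pos.2 hs
  positivity

lemma phiK_strictConvexOn {κ : ℝ} (hκ : 0 < κ) :
    StrictConvexOn ℝ (Set.Ioi (0 : ℝ)) (phiK κ) := by
  apply strictConvexOn_of_deriv2_pos (convex_Ioi 0)
  · intro s hs
    exact ((hasDerivAt_phiK κ hs).differentiableAt.continuousAt).continuousWithinAt
  · intro s hs
    rw [interior_Ioi] at hs
    have he : deriv (phiK κ) =ᶠ[nhds s] phiK1 κ :=
      Filter.eventuallyEq_of_mem (isOpen_Ioi.mem_nhds hs)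
        (fun t ht => (hasDerivAt_phiK κ ht).deriv)
    have h2 : deriv (deriv (phiK κ)) s = phiK2 κ s := by
      rw [he.deriv_eq]; exact (hasDerivAt_phiK1 κ hs).deriv
    have : deriv^[2] (phiK κ) s = deriv (deriv (phiK κ)) s := by
      simp [Function.iterate_succ_apply']
    rw [this, h2]
    exact phiK2_pos hκ hs

/-- Tangent line bound at `s = 8/3`, strict away from the tangency point. -/
lemma phiK_tangent_lt {κ : ℝ} (hκ : 0 < κ) {s : ℝ} (hs : 0 < s) (hne : s ≠ 8 / 3) :
    phiK κ (8 / 3) + phiK1 κ (8 / 3) * (s - 8 / 3) < phiK κ s := by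
  have ha : (8 / 3 : ℝ) ∈ Set.Ioi (0 : ℝ) := by norm_num
  have hC := phiK_strictConvexOn hκ
  have hd := hasDerivAt_phiK κ (show (0 : ℝ) < 8 / 3 by norm_num)
  rcases lt_or_gt_of_ne hne with h | h
  · have hsl := hC.slope_lt_of_hasDerivAt (Set.mem_Ioi.2 hs) ha h hd
    rw [slope_def_field] at hsl
    rw [div_lt_iff₀ (by linarith)] at hsl
    nlinarith
  · have hsl := hC.lt_slope_of_hasDerivAt ha (Set.mem_Ioi.2 hs) h hd
    rw [slope_def_field] at hsl
    rw [lt_div_iff₀ (by linarith)] at hsl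
    nlinarith

lemma phiK_tangent_le {κ : ℝ} (hκ : 0 < κ) {s : ℝ} (hs : 0 < s) :
    phiK κ (8 / 3) + phiK1 κ (8 / 3) * (s - 8 / 3) ≤ phiK κ s := by
  by_cases hne : s = 8 / 3
  · subst hne; simp
  · exact (phiK_tangent_lt hκ hs hne).le

/-- For any four distinct points on the unit sphere S² ⊂ ℝ³,
∑_{j ≠ j'} g_κ(‖y_j − y_{j'}‖) ≥ 12 g_κ(√(8/3)), with equality iff all six pairwise
distances equal √(8/3) (the vertices of a regular tetrahedron inscribed in the sphere). -/
theorem sphere_four_points_energy_min (κ : ℝ) (hκ : 0 < κ)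
    (y : Fin 4 → EuclideanSpace ℝ (Fin 3)) (hsphere : ∀ j, ‖y j‖ = 1)
    (hdist : Function.Injective y) :
    interactionEnergy κ y ≥ 12 * resolventKernel3D κ (Real.sqrt (8 / 3)) ∧
    (interactionEnergy κ y = 12 * resolventKernel3D κ (Real.sqrt (8 / 3)) ↔
      ∀ j j' : Fin 4, j ≠ j' → ‖y j - y j'‖ = Real.sqrt (8 / 3)) := by
  classical
  set T : Finset (Fin 4 × Fin 4) := Finset.univ.offDiag with hT
  have hTcard : T.card = 12 := by
    rw [hT, Finset.offDiag_card]
    simp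
  -- squared distances
  set s : Fin 4 × Fin 4 → ℝ := fun p => ‖y p.1 - y p.2‖ ^ 2 with hsdef
  have hspos : ∀ p ∈ T, 0 < s p := by
    intro p hp
    rw [hT, Finset.mem_offDiag] at hp
    have hne : y p.1 - y p.2 ≠ 0 := sub_ne_zero.2 fun h => hp.2.2 (hdist h)
    have : 0 < ‖y p.1 - y p.2‖ := norm_pos_iff.2 hne
    positivity
  -- kernel in terms of phiK of squared distance
  have hE : interactionEnergy κ y = ∑ p ∈ T, phiK κ (s p) := by
    unfold interactionEnergy
    refine Finset.sum_congr rfl fun p hp => ?_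
    unfold resolventKernel3D phiK
    rw [hsdef]
    rw [Real.sqrt_sq (norm_nonneg _)]
  have hval : phiK κ (8 / 3) = resolventKernel3D κ (Real.sqrt (8 / 3)) := rfl
  -- sum of squared distances
  have hinner : ∑ p ∈ T, (inner ℝ (y p.1) (y p.2) : ℝ) = ‖∑ j, y j‖ ^ 2 - 4 := by
    have hprod : ∑ p ∈ Finset.univ ×ˢ Finset.univ, (inner ℝ (y p.1) (y p.2) : ℝ)
        = ‖∑ j, y j‖ ^ 2 := by
      rw [← real_inner_self_eq_norm_sq, sum_inner]
      rw [Finset.sum_product]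
      exact Finset.sum_congr rfl fun j _ => by rw [inner_sum]
    have hdiag : ∑ p ∈ (Finset.univ : Finset (Fin 4)).diag, (inner ℝ (y p.1) (y p.2) : ℝ)
        = 4 := by
      rw [Finset.sum_diag]
      have : ∀ j : Fin 4, (inner ℝ (y j) (y j) : ℝ) = 1 := by
        intro j; rw [real_inner_self_eq_norm_sq, hsphere j]; norm_num
      simp [this, hsphere]
    have hsplit := Finset.sum_union (f := fun p : Fin 4 × Fin 4 => (inner ℝ (y p.1) (y p.2) : ℝ))
      (Finset.disjoint_diag_offDiag (Finset.univ : Finset (Fin 4)))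
    rw [Finset.diag_union_offDiag] at hsplit
    rw [hT]
    have := hprod
    rw [hsplit, hdiag] at this
    linarith
  have hsum : ∑ p ∈ T, s p = 32 - 2 * ‖∑ j, y j‖ ^ 2 := by
    have hterm : ∀ p ∈ T, s p = 2 - 2 * (inner ℝ (y p.1) (y p.2) : ℝ) := by
      intro p hp
      simp only [hsdef]
      rw [norm_sub_sq_real, hsphere p.1, hsphere p.2]
      ring
    rw [Finset.sum_congr rfl hterm, Finset.sum_sub_distrib, Finset.sum_const, hTcard,
      ← Finset.mul_sum, hinner]
    push_cast
    ring
  have hsum_le : ∑ p ∈ T, s p ≤ 32 := by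
    rw [hsum]
    nlinarith [sq_nonneg ‖∑ j, y j‖]
  -- tangent line sums
  set c : ℝ := phiK1 κ (8 / 3) with hc
  set v : ℝ := phiK κ (8 / 3) with hv
  have hcneg : c < 0 := phiK1_neg hκ (by norm_num)
  have htangent_sum : ∑ p ∈ T, (v + c * (s p - 8 / 3))
      = 12 * v + c * (∑ p ∈ T, s p - 32) := by
    rw [Finset.sum_add_distrib, Finset.sum_const, hTcard, ← Finset.mul_sum,
      Finset.sum_sub_distrib, Finset.sum_const, hTcard]
    push_cast
    ring
  have htangent_ge : 12 * v ≤ ∑ p ∈ T, (v + c * (s p - 8 / 3)) := by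
    rw [htangent_sum]
    nlinarith
  have hterm_le : ∀ p ∈ T, v + c * (s p - 8 / 3) ≤ phiK κ (s p) := fun p hp =>
    phiK_tangent_le hκ (hspos p hp)
  have hmain : 12 * v ≤ interactionEnergy κ y := by
    rw [hE]
    exact le_trans htangent_ge (Finset.sum_le_sum hterm_le)
  constructor
  · rw [← hval]; exact hmain
  constructor
  · intro hEq
    intro j j' hjj
    have hpT : (j, j') ∈ T := by
      rw [hT, Finset.mem_offDiag]; exact ⟨Finset.mem_univ _, Finset.mem_univ _, hjj⟩
    by_contra hne
    have hsne : s (j, j') ≠ 8 / 3 := by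
      intro h
      apply hne
      have h8 : (0:ℝ) ≤ 8/3 := by norm_num
      rw [← Real.sqrt_sq (norm_nonneg (y j - y j'))]
      rw [hsdef] at h
      simp only at h
      rw [h]
    have hlt : ∑ p ∈ T, (v + c * (s p - 8 / 3)) < ∑ p ∈ T, phiK κ (s p) :=
      Finset.sum_lt_sum hterm_le ⟨(j, j'), hpT, phiK_tangent_lt hκ (hspos _ hpT) hsne⟩
    rw [← hE, hEq, ← hval] at hlt
    linarith
  · intro hall
    unfold interactionEnergy
    have heach : ∀ p ∈ Finset.univ.offDiag,
        resolventKernel3D κ ‖y p.1 - y p.2‖ = resolventKernel3D κ (Real.sqrt (8 / 3)) := by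
      intro p hp
      rw [Finset.mem_offDiag] at hp
      rw [hall p.1 p.2 hp.2.2]
    rw [Finset.sum_congr rfl heach, Finset.sum_const]
    rw [show (Finset.univ.offDiag : Finset (Fin 4 × Fin 4)).card = 12 from hTcard]
    simp [nsmul_eq_mul]
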